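/- With the same setup: if detours D₁ and D₂ are dependent (share a vertex) and interleaved with x₁ ≤ x₂ ≤ y₁ ≤ y₂, then (a) if x₁ ≠ x₂ the protected edge e₁ lies on the subpath π(x₁,x₂), and (b) if y₁ ≠ y₂ the protected edge e₂ lies on the subpath π(y₁,y₂). -/

import Mathlib

set_option linter.unusedSectionVars false
set_option linter.unusedVariables false


/-- The `W`-weight of a walk: the sum of the weights of its edges. -/
def walkWeight {V : Type*} (W : Sym2 V → ℝ) {G : SimpleGraph V} {u v : V}
    (p : G.Walk u v) : ℝ := (p.edges.map W).sum

/-- Position of a vertex along a walk (index in its support list); vertices of `π(s,v)` are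
ordered by distance from `s`, and `vpos π u < vpos π u'` means `u` is closer to `s`. -/
def vpos {V : Type*} [DecidableEq V] {G : SimpleGraph V} {s v : V}
    (π : G.Walk s v) (u : V) : ℕ := π.support.idxOf u

open SimpleGraph List

namespace RPaux

variable {V : Type*} [DecidableEq V] {G : SimpleGraph V}

lemma walkWeight_append (W : Sym2 V → ℝ) {u v w : V} (p : G.Walk u v) (q : G.Walk v w) :
    walkWeight W (p.append q) = walkWeight W p + walkWeight W q := by
  simp [walkWeight, Walk.edges_append]

lemma walkWeight_take_drop (W : Sym2 V → ℝ) {u v w : V} (p : G.Walk u w) (h : v ∈ p.support) :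
    walkWeight W (p.takeUntil v h) + walkWeight W (p.dropUntil v h) = walkWeight W p := by
  rw [← walkWeight_append, Walk.take_spec]

lemma sum_le_of_sublist (W : Sym2 V → ℝ) (hW : ∀ e, 0 ≤ W e) {l₁ l₂ : List (Sym2 V)}
    (h : l₁.Sublist l₂) : (l₁.map W).sum ≤ (l₂.map W).sum := by
  induction h with
  | slnil => simp
  | cons a h ih => simp only [List.map_cons, List.sum_cons]; have := hW a; linarith
  | cons_cons a h ih => simp only [List.map_cons, List.sum_cons]; linarith

lemma eq_of_sublist_sum (W : Sym2 V → ℝ) (hW : ∀ e, 0 < W e) {l₁ l₂ : List (Sym2 V)}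
    (h : l₁.Sublist l₂) (hs : ((l₂.map W).sum : ℝ) ≤ (l₁.map W).sum) : l₁ = l₂ := by
  induction h with
  | slnil => rfl
  | cons a h ih =>
    exfalso
    have h1 := sum_le_of_sublist W (fun e => (hW e).le) h
    have h2 := hW a
    simp only [List.map_cons, List.sum_cons] at hs
    linarith
  | cons_cons a h ih =>
    simp only [List.map_cons, List.sum_cons] at hs
    rw [ih (by linarith)]

lemma walk_eq_of_edges_eq {u w : V} (p : G.Walk u w) :
    ∀ q : G.Walk u w, p.edges = q.edges → p = q := by
  induction p with
  | nil =>
    intro q he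
    cases q with
    | nil => rfl
    | cons h q => simp at he
  | cons h p ih =>
    intro q he
    cases q with
    | nil => simp at he
    | cons h' q =>
      simp only [Walk.edges_cons, List.cons.injEq] at he
      obtain ⟨h1, h2⟩ := he
      obtain rfl := Sym2.congr_right.mp h1
      rw [ih q h2]

lemma edges_dropUntil_sublist {u v w : V} (p : G.Walk v w) (h : u ∈ p.support) :
    (p.dropUntil u h).edges.Sublist p.edges := by
  conv_rhs => rw [← Walk.take_spec p h]
  rw [Walk.edges_append]
  exact List.sublist_append_right _ _

lemma edges_bypass_sublist {u v : V} (p : G.Walk u v) : p.bypass.edges.Sublist p.edges := by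
  induction p with
  | nil => simp [Walk.bypass]
  | cons h p ih =>
    simp only [Walk.bypass]
    split_ifs with hs
    · exact ((edges_dropUntil_sublist _ hs).trans ih).trans (List.sublist_cons_self _ _)
    · simp only [Walk.edges_cons]
      exact List.Sublist.cons₂ _ ih

lemma support_getLast {u v : V} (p : G.Walk u v) :
    p.support.getLast p.support_ne_nil = v := by
  induction p with
  | nil => rfl
  | cons h p ih =>
    simp only [Walk.support_cons, List.getLast_cons p.support_ne_nil]
    exact ih

lemma vpos_start {u v : V} (p : G.Walk u v) : vpos p u = 0 := by
  unfold vpos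
  rw [Walk.support_eq_cons]
  exact List.idxOf_cons_self

lemma vpos_end {s v : V} (π : G.Walk s v) (hπ : π.IsPath) :
    vpos π v = π.support.length - 1 := by
  have hne := π.support_ne_nil
  have hlast := support_getLast π
  have hsplit := List.dropLast_append_getLast hne
  rw [hlast] at hsplit
  have hnd := hπ.support_nodup
  have hnotmem : v ∉ π.support.dropLast := by
    intro hv
    rw [← hsplit, List.nodup_append] at hnd
    exact hnd.2.2 v hv v (by simp) rfl
  have hlen : π.support.dropLast.length = π.support.length - 1 := List.length_dropLast
  have hpos : 0 < π.support.length := List.length_pos_iff.mpr hne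
  unfold vpos
  conv_lhs => rw [← hsplit]
  rw [List.idxOf_append_of_notMem hnotmem]
  simp [hlen]

lemma vpos_takeUntil_le {s v u w : V} {π : G.Walk s v} (hπ : π.IsPath) (hu : u ∈ π.support)
    (hw : w ∈ (π.takeUntil u hu).support) : vpos π w ≤ vpos π u := by
  have hsplit : π.support = (π.takeUntil u hu).support ++ (π.dropUntil u hu).support.tail := by
    rw [← Walk.support_append, Walk.take_spec]
  have hend := vpos_end (π.takeUntil u hu) (hπ.takeUntil hu)
  unfold vpos at hend ⊢
  rw [hsplit, List.idxOf_append_of_mem hw,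
    List.idxOf_append_of_mem (Walk.end_mem_support _)]
  have hlt := List.idxOf_lt_length_iff.2 hw
  omega

lemma vpos_dropUntil_ge {s v u w : V} {π : G.Walk s v} (hπ : π.IsPath) (hu : u ∈ π.support)
    (hw : w ∈ (π.dropUntil u hu).support) : vpos π u ≤ vpos π w := by
  have hsplit : π.support = (π.takeUntil u hu).support ++ (π.dropUntil u hu).support.tail := by
    rw [← Walk.support_append, Walk.take_spec]
  rw [Walk.support_eq_cons (π.dropUntil u hu), List.mem_cons] at hw
  rcases hw with rfl | hw
  · exact le_refl _
  have hnd := hπ.support_nodup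
  rw [hsplit] at hnd
  have hdisj := List.disjoint_of_nodup_append hnd
  have hwn : w ∉ (π.takeUntil u hu).support := fun hmem => hdisj hmem hw
  have hend := vpos_end (π.takeUntil u hu) (hπ.takeUntil hu)
  have humem : u ∈ (π.takeUntil u hu).support := Walk.end_mem_support _
  have hlt := List.idxOf_lt_length_iff.2 humem
  unfold vpos at hend ⊢
  rw [hsplit, List.idxOf_append_of_notMem hwn, List.idxOf_append_of_mem humem]
  omega

lemma vpos_inj {s v b c : V} {π : G.Walk s v} (hb : b ∈ π.support) (hc : c ∈ π.support)
    (h : vpos π b = vpos π c) : b = c := (List.idxOf_inj hb).mp h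

lemma walkWeight_bypass_le (W : Sym2 V → ℝ) (hW : ∀ e, 0 ≤ W e) {u v : V} (p : G.Walk u v) :
    walkWeight W p.bypass ≤ walkWeight W p :=
  sum_le_of_sublist W hW (edges_bypass_sublist p)

lemma bypass_eq_self_of_weight_le (W : Sym2 V → ℝ) (hW : ∀ e, 0 < W e) {u v : V}
    (p : G.Walk u v) (h : walkWeight W p ≤ walkWeight W p.bypass) : p.bypass = p :=
  walk_eq_of_edges_eq p.bypass p (eq_of_sublist_sum W hW (edges_bypass_sublist p) h)

end RPaux

/-- Setup of single-failure replacement-path detours: `π = π(s,v)` is the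
unique shortest path; for `i ∈ {0,1}`, the failed edge is `e_i = s(a i, a' i) ∈ π` lying on
`π` between `x i` and `y i`; the replacement path
`P_i = π(s, x_i) ∘ D_i ∘ π(y_i, v)` is a shortest `s–v` path avoiding `e_i`, the detour
`D_i` is internally vertex-disjoint from `π`, and its starting point `x i` is the divergence
point closest to `s` among all optimal replacement paths (hypothesis `hmin`).  Shortest
paths in every edge-deleted subgraph are unique under `W` (hypothesis `huniq`).
**Statement 8.** Conclusion: if `D 0` and `D 1` are dependent (share a vertex) and
interleaved with `x 0 ≤ x 1 ≤ y 0 ≤ y 1`, then (a) if `x 0 ≠ x 1` the failed edge `e₁` lies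
on `π(x 0, x 1)`, and (b) if `y 0 ≠ y 1` the failed edge `e₂` lies on `π(y 0, y 1)`
(edge locations expressed via positions of the edge endpoints along `π`). -/
theorem dependent_interleaved_detours_fault_location {V : Type*} [DecidableEq V]
    (G : SimpleGraph V) (W : Sym2 V → ℝ) (hW : ∀ e, 0 < W e)
    (huniq : ∀ (s' : Set (Sym2 V)) (u w : V) (p q : G.Walk u w), p.IsPath → q.IsPath →
      (∀ f ∈ p.edges, f ∉ s') → (∀ f ∈ q.edges, f ∉ s') →
      (∀ r : G.Walk u w, r.IsPath → (∀ f ∈ r.edges, f ∉ s') →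
        walkWeight W p ≤ walkWeight W r) →
      (∀ r : G.Walk u w, r.IsPath → (∀ f ∈ r.edges, f ∉ s') →
        walkWeight W q ≤ walkWeight W r) →
      p = q)
    (s v : V) (π : G.Walk s v) (hπ : π.IsPath)
    (hπopt : ∀ R : G.Walk s v, R.IsPath → walkWeight W π ≤ walkWeight W R)
    (x y a a' : Fin 2 → V)
    (hx : ∀ i, x i ∈ π.support) (hy : ∀ i, y i ∈ π.support)
    (ha : ∀ i, s(a i, a' i) ∈ π.edges)
    (hconsec : ∀ i, vpos π (a' i) = vpos π (a i) + 1)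
    (hbetween : ∀ i, vpos π (x i) ≤ vpos π (a i) ∧ vpos π (a' i) ≤ vpos π (y i))
    (D : (i : Fin 2) → G.Walk (x i) (y i))
    (hDpath : ∀ i, (D i).IsPath)
    (hintern : ∀ i, ∀ u ∈ (D i).support, u ∈ π.support → u = x i ∨ u = y i)
    (hPpath : ∀ i,
      ((π.takeUntil (x i) (hx i)).append ((D i).append (π.dropUntil (y i) (hy i)))).IsPath)
    (hPavoid : ∀ i, s(a i, a' i) ∉
      ((π.takeUntil (x i) (hx i)).append ((D i).append (π.dropUntil (y i) (hy i)))).edges)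
    (hPopt : ∀ i, ∀ R : G.Walk s v, R.IsPath → s(a i, a' i) ∉ R.edges →
      walkWeight W
        ((π.takeUntil (x i) (hx i)).append ((D i).append (π.dropUntil (y i) (hy i)))) ≤
      walkWeight W R)
    (hmin : ∀ i, ∀ (u : V) (hu : u ∈ π.support) (R : G.Walk u v),
      ((π.takeUntil u hu).append R).IsPath →
      s(a i, a' i) ∉ ((π.takeUntil u hu).append R).edges →
      walkWeight W ((π.takeUntil u hu).append R) ≤
        walkWeight W
          ((π.takeUntil (x i) (hx i)).append ((D i).append (π.dropUntil (y i) (hy i)))) →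
      0 < R.length → R.getVert 1 ∉ π.support →
      vpos π (x i) ≤ vpos π u)
    (hdep : ∃ u, u ∈ (D 0).support ∧ u ∈ (D 1).support)
    (horder1 : vpos π (x 0) ≤ vpos π (x 1))
    (horder2 : vpos π (x 1) ≤ vpos π (y 0))
    (horder3 : vpos π (y 0) ≤ vpos π (y 1)) :
    (x 0 ≠ x 1 → vpos π (x 0) ≤ vpos π (a 0) ∧ vpos π (a' 0) ≤ vpos π (x 1)) ∧
    (y 0 ≠ y 1 → vpos π (y 0) ≤ vpos π (a 1) ∧ vpos π (a' 1) ≤ vpos π (y 1)) := by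
  classical
  obtain ⟨u, hu0, hu1⟩ := hdep
  have ha0π : a 0 ∈ π.support := Walk.fst_mem_support_of_mem_edges π (ha 0)
  have ha'0π : a' 0 ∈ π.support := Walk.snd_mem_support_of_mem_edges π (ha 0)
  have ha1π : a 1 ∈ π.support := Walk.fst_mem_support_of_mem_edges π (ha 1)
  have ha'1π : a' 1 ∈ π.support := Walk.snd_mem_support_of_mem_edges π (ha 1)
  have hb01 : vpos π (x 0) ≤ vpos π (a 0) := (hbetween 0).1
  have hb02 : vpos π (a' 0) ≤ vpos π (y 0) := (hbetween 0).2
  have hb11 : vpos π (x 1) ≤ vpos π (a 1) := (hbetween 1).1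
  have hb12 : vpos π (a' 1) ≤ vpos π (y 1) := (hbetween 1).2
  have hc0 : vpos π (a' 0) = vpos π (a 0) + 1 := hconsec 0
  have hc1 : vpos π (a' 1) = vpos π (a 1) + 1 := hconsec 1
  set Q : G.Walk s v := (π.takeUntil (x 1) (hx 1)).append
    (((D 1).takeUntil u hu1).append (((D 0).dropUntil u hu0).append
      (π.dropUntil (y 0) (hy 0)))) with hQdef
  set Q' : G.Walk s v := (π.takeUntil (x 0) (hx 0)).append
    (((D 0).takeUntil u hu0).append (((D 1).dropUntil u hu1).append
      (π.dropUntil (y 1) (hy 1)))) with hQ'def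
  have hsum : walkWeight W Q + walkWeight W Q' =
      walkWeight W ((π.takeUntil (x 0) (hx 0)).append
        ((D 0).append (π.dropUntil (y 0) (hy 0)))) +
      walkWeight W ((π.takeUntil (x 1) (hx 1)).append
        ((D 1).append (π.dropUntil (y 1) (hy 1)))) := by
    have hD0 := RPaux.walkWeight_take_drop W (D 0) hu0
    have hD1 := RPaux.walkWeight_take_drop W (D 1) hu1
    rw [hQdef, hQ'def]
    simp only [RPaux.walkWeight_append]
    linarith
  have hbQ : walkWeight W Q.bypass ≤ walkWeight W Q :=
    RPaux.walkWeight_bypass_le W (fun e => (hW e).le) Q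
  have hbQ' : walkWeight W Q'.bypass ≤ walkWeight W Q' :=
    RPaux.walkWeight_bypass_le W (fun e => (hW e).le) Q'
  constructor
  · -- part (a)
    intro hne
    refine ⟨hb01, ?_⟩
    by_contra hcon
    push_neg at hcon
    have hxx : vpos π (x 0) < vpos π (x 1) :=
      lt_of_le_of_ne horder1 (fun h => hne (RPaux.vpos_inj (hx 0) (hx 1) h))
    have hx1a0 : vpos π (x 1) ≤ vpos π (a 0) := by omega
    have hQav : s(a 0, a' 0) ∉ Q.edges := by
      rw [hQdef]
      simp only [Walk.edges_append, List.mem_append]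
      rintro (h1 | h2 | h3 | h4)
      · have hv := RPaux.vpos_takeUntil_le hπ (hx 1)
          (Walk.snd_mem_support_of_mem_edges _ h1)
        omega
      · have h2' : s(a 0, a' 0) ∈ (D 1).edges := Walk.edges_takeUntil_subset _ hu1 h2
        have ha0D : a 0 ∈ (D 1).support := Walk.fst_mem_support_of_mem_edges _ h2'
        have ha'0D : a' 0 ∈ (D 1).support := Walk.snd_mem_support_of_mem_edges _ h2'
        rcases hintern 1 (a 0) ha0D ha0π with h | h
        · rcases hintern 1 (a' 0) ha'0D ha'0π with h' | h'
          · have e1 : vpos π (a 0) = vpos π (x 1) := by rw [h]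
            have e2 : vpos π (a' 0) = vpos π (x 1) := by rw [h']
            omega
          · have e1 : vpos π (a 0) = vpos π (x 1) := by rw [h]
            have e2 : vpos π (a' 0) = vpos π (y 1) := by rw [h']
            have ha1x : a 1 = x 1 := RPaux.vpos_inj ha1π (hx 1) (by omega)
            have ha'1y : a' 1 = y 1 := RPaux.vpos_inj ha'1π (hy 1) (by omega)
            apply hPavoid 1
            have heq : s(a 1, a' 1) = s(a 0, a' 0) := by rw [ha1x, ha'1y, ← h, ← h']
            rw [heq]
            simp only [Walk.edges_append, List.mem_append]
            exact Or.inr (Or.inl h2')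
        · have e1 : vpos π (a 0) = vpos π (y 1) := by rw [h]
          omega
      · apply hPavoid 0
        simp only [Walk.edges_append, List.mem_append]
        exact Or.inr (Or.inl (Walk.edges_dropUntil_subset _ hu0 h3))
      · have hv := RPaux.vpos_dropUntil_ge hπ (hy 0)
          (Walk.fst_mem_support_of_mem_edges _ h4)
        omega
    have hQ'av : s(a 1, a' 1) ∉ Q'.edges := by
      rw [hQ'def]
      simp only [Walk.edges_append, List.mem_append]
      rintro (h1 | h2 | h3 | h4)
      · have hv := RPaux.vpos_takeUntil_le hπ (hx 0)
          (Walk.fst_mem_support_of_mem_edges _ h1)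
        omega
      · have h2' : s(a 1, a' 1) ∈ (D 0).edges := Walk.edges_takeUntil_subset _ hu0 h2
        have ha1D : a 1 ∈ (D 0).support := Walk.fst_mem_support_of_mem_edges _ h2'
        have ha'1D : a' 1 ∈ (D 0).support := Walk.snd_mem_support_of_mem_edges _ h2'
        rcases hintern 0 (a 1) ha1D ha1π with h | h
        · have e1 : vpos π (a 1) = vpos π (x 0) := by rw [h]
          omega
        · have e1 : vpos π (a 1) = vpos π (y 0) := by rw [h]
          rcases hintern 0 (a' 1) ha'1D ha'1π with h' | h'
          · have e2 : vpos π (a' 1) = vpos π (x 0) := by rw [h']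
            omega
          · have e2 : vpos π (a' 1) = vpos π (y 0) := by rw [h']
            omega
      · apply hPavoid 1
        simp only [Walk.edges_append, List.mem_append]
        exact Or.inr (Or.inl (Walk.edges_dropUntil_subset _ hu1 h3))
      · have hv := RPaux.vpos_dropUntil_ge hπ (hy 1)
          (Walk.fst_mem_support_of_mem_edges _ h4)
        omega
    have hwQ : walkWeight W ((π.takeUntil (x 0) (hx 0)).append
        ((D 0).append (π.dropUntil (y 0) (hy 0)))) ≤ walkWeight W Q.bypass :=
      hPopt 0 Q.bypass Q.bypass_isPath (fun hm => hQav (Q.edges_bypass_subset hm))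
    have hwQ' : walkWeight W ((π.takeUntil (x 1) (hx 1)).append
        ((D 1).append (π.dropUntil (y 1) (hy 1)))) ≤ walkWeight W Q'.bypass :=
      hPopt 1 Q'.bypass Q'.bypass_isPath (fun hm => hQ'av (Q'.edges_bypass_subset hm))
    have heq1 : walkWeight W Q' ≤ walkWeight W Q'.bypass := by linarith
    have hQ'eq : Q'.bypass = Q' := RPaux.bypass_eq_self_of_weight_le W hW Q' heq1
    have hQ'path : Q'.IsPath := hQ'eq ▸ Q'.bypass_isPath
    have hQ'w : walkWeight W Q' = walkWeight W ((π.takeUntil (x 1) (hx 1)).append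
        ((D 1).append (π.dropUntil (y 1) (hy 1)))) := by
      have := hQ'eq ▸ hwQ'
      linarith
    have hPQ : (π.takeUntil (x 1) (hx 1)).append
        ((D 1).append (π.dropUntil (y 1) (hy 1))) = Q' := by
      refine huniq {s(a 1, a' 1)} s v _ Q' (hPpath 1) hQ'path ?_ ?_ ?_ ?_
      · intro f hf hfs; rw [Set.mem_singleton_iff] at hfs; subst hfs; exact hPavoid 1 hf
      · intro f hf hfs; rw [Set.mem_singleton_iff] at hfs; subst hfs; exact hQ'av hf
      · intro r hr hrs; exact hPopt 1 r hr (fun hm => hrs _ hm rfl)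
      · intro r hr hrs; rw [hQ'w]; exact hPopt 1 r hr (fun hm => hrs _ hm rfl)
    have hx1P : x 1 ∈ ((π.takeUntil (x 1) (hx 1)).append
        ((D 1).append (π.dropUntil (y 1) (hy 1)))).support := by
      rw [Walk.mem_support_append_iff]
      exact Or.inl (Walk.end_mem_support _)
    rw [hPQ, hQ'def] at hx1P
    rw [Walk.mem_support_append_iff] at hx1P
    rcases hx1P with h1 | hx1P
    · have hv := RPaux.vpos_takeUntil_le hπ (hx 0) h1
      omega
    rw [Walk.mem_support_append_iff] at hx1P
    rcases hx1P with h2 | hx1P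
    · have h2' := Walk.support_takeUntil_subset _ hu0 h2
      rcases hintern 0 (x 1) h2' (hx 1) with h | h
      · exact hne h.symm
      · have e1 : vpos π (x 1) = vpos π (y 0) := by rw [h]
        omega
    rw [Walk.mem_support_append_iff] at hx1P
    rcases hx1P with h3 | h4
    · have hvs := RPaux.vpos_dropUntil_ge (hDpath 1) hu1 h3
      rw [RPaux.vpos_start] at hvs
      have hux : u = x 1 := RPaux.vpos_inj hu1 ((D 1).start_mem_support)
        (by rw [RPaux.vpos_start]; omega)
      have hx1D0 : x 1 ∈ (D 0).support := hux ▸ hu0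
      rcases hintern 0 (x 1) hx1D0 (hx 1) with h | h
      · exact hne h.symm
      · have e1 : vpos π (x 1) = vpos π (y 0) := by rw [h]
        omega
    · have hv := RPaux.vpos_dropUntil_ge hπ (hy 1) h4
      omega
  · -- part (b)
    intro hne
    refine ⟨?_, hb12⟩
    by_contra hcon
    push_neg at hcon
    have hyy : vpos π (y 0) < vpos π (y 1) :=
      lt_of_le_of_ne horder3 (fun h => hne (RPaux.vpos_inj (hy 0) (hy 1) h))
    have hQav : s(a 1, a' 1) ∉ Q.edges := by
      rw [hQdef]
      simp only [Walk.edges_append, List.mem_append]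
      rintro (h1 | h2 | h3 | h4)
      · have hv := RPaux.vpos_takeUntil_le hπ (hx 1)
          (Walk.snd_mem_support_of_mem_edges _ h1)
        omega
      · apply hPavoid 1
        simp only [Walk.edges_append, List.mem_append]
        exact Or.inr (Or.inl (Walk.edges_takeUntil_subset _ hu1 h2))
      · have h3' : s(a 1, a' 1) ∈ (D 0).edges := Walk.edges_dropUntil_subset _ hu0 h3
        have ha1D : a 1 ∈ (D 0).support := Walk.fst_mem_support_of_mem_edges _ h3'
        have ha'1D : a' 1 ∈ (D 0).support := Walk.snd_mem_support_of_mem_edges _ h3'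
        rcases hintern 0 (a 1) ha1D ha1π with h | h
        · rcases hintern 0 (a' 1) ha'1D ha'1π with h' | h'
          · have e1 : vpos π (a 1) = vpos π (x 0) := by rw [h]
            have e2 : vpos π (a' 1) = vpos π (x 0) := by rw [h']
            omega
          · have e1 : vpos π (a 1) = vpos π (x 0) := by rw [h]
            have e2 : vpos π (a' 1) = vpos π (y 0) := by rw [h']
            have ha0x : a 0 = x 0 := RPaux.vpos_inj ha0π (hx 0) (by omega)
            have ha'0y : a' 0 = y 0 := RPaux.vpos_inj ha'0π (hy 0) (by omega)
            apply hPavoid 0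
            have heq : s(a 0, a' 0) = s(a 1, a' 1) := by rw [ha0x, ha'0y, ← h, ← h']
            rw [heq]
            simp only [Walk.edges_append, List.mem_append]
            exact Or.inr (Or.inl h3')
        · have e1 : vpos π (a 1) = vpos π (y 0) := by rw [h]
          omega
      · have hv := RPaux.vpos_dropUntil_ge hπ (hy 0)
          (Walk.fst_mem_support_of_mem_edges _ h4)
        omega
    have hQ'av : s(a 0, a' 0) ∉ Q'.edges := by
      rw [hQ'def]
      simp only [Walk.edges_append, List.mem_append]
      rintro (h1 | h2 | h3 | h4)
      · have hv := RPaux.vpos_takeUntil_le hπ (hx 0)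
          (Walk.snd_mem_support_of_mem_edges _ h1)
        omega
      · apply hPavoid 0
        simp only [Walk.edges_append, List.mem_append]
        exact Or.inr (Or.inl (Walk.edges_takeUntil_subset _ hu0 h2))
      · have h3' : s(a 0, a' 0) ∈ (D 1).edges := Walk.edges_dropUntil_subset _ hu1 h3
        have ha0D : a 0 ∈ (D 1).support := Walk.fst_mem_support_of_mem_edges _ h3'
        have ha'0D : a' 0 ∈ (D 1).support := Walk.snd_mem_support_of_mem_edges _ h3'
        rcases hintern 1 (a' 0) ha'0D ha'0π with h' | h'
        · have e2 : vpos π (a' 0) = vpos π (x 1) := by rw [h']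
          rcases hintern 1 (a 0) ha0D ha0π with h | h
          · have e1 : vpos π (a 0) = vpos π (x 1) := by rw [h]
            omega
          · have e1 : vpos π (a 0) = vpos π (y 1) := by rw [h]
            omega
        · have e2 : vpos π (a' 0) = vpos π (y 1) := by rw [h']
          omega
      · have hv := RPaux.vpos_dropUntil_ge hπ (hy 1)
          (Walk.fst_mem_support_of_mem_edges _ h4)
        omega
    have hwQ : walkWeight W ((π.takeUntil (x 1) (hx 1)).append
        ((D 1).append (π.dropUntil (y 1) (hy 1)))) ≤ walkWeight W Q.bypass :=
      hPopt 1 Q.bypass Q.bypass_isPath (fun hm => hQav (Q.edges_bypass_subset hm))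
    have hwQ' : walkWeight W ((π.takeUntil (x 0) (hx 0)).append
        ((D 0).append (π.dropUntil (y 0) (hy 0)))) ≤ walkWeight W Q'.bypass :=
      hPopt 0 Q'.bypass Q'.bypass_isPath (fun hm => hQ'av (Q'.edges_bypass_subset hm))
    have heq1 : walkWeight W Q ≤ walkWeight W Q.bypass := by linarith
    have hQeq : Q.bypass = Q := RPaux.bypass_eq_self_of_weight_le W hW Q heq1
    have hQpath : Q.IsPath := hQeq ▸ Q.bypass_isPath
    have hQw : walkWeight W Q = walkWeight W ((π.takeUntil (x 1) (hx 1)).append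
        ((D 1).append (π.dropUntil (y 1) (hy 1)))) := by
      have := hQeq ▸ hwQ
      linarith
    have hPQ : (π.takeUntil (x 1) (hx 1)).append
        ((D 1).append (π.dropUntil (y 1) (hy 1))) = Q := by
      refine huniq {s(a 1, a' 1)} s v _ Q (hPpath 1) hQpath ?_ ?_ ?_ ?_
      · intro f hf hfs; rw [Set.mem_singleton_iff] at hfs; subst hfs; exact hPavoid 1 hf
      · intro f hf hfs; rw [Set.mem_singleton_iff] at hfs; subst hfs; exact hQav hf
      · intro r hr hrs; exact hPopt 1 r hr (fun hm => hrs _ hm rfl)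
      · intro r hr hrs; rw [hQw]; exact hPopt 1 r hr (fun hm => hrs _ hm rfl)
    have hy0Q : y 0 ∈ Q.support := by
      rw [hQdef]
      rw [Walk.mem_support_append_iff]
      refine Or.inr ?_
      rw [Walk.mem_support_append_iff]
      refine Or.inr ?_
      rw [Walk.mem_support_append_iff]
      exact Or.inr (Walk.start_mem_support _)
    rw [← hPQ] at hy0Q
    rw [Walk.mem_support_append_iff] at hy0Q
    rcases hy0Q with h1 | hy0Q
    · have hv := RPaux.vpos_takeUntil_le hπ (hx 1) h1
      omega
    rw [Walk.mem_support_append_iff] at hy0Q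
    rcases hy0Q with h2 | h3
    · rcases hintern 1 (y 0) h2 (hy 0) with h | h
      · have e1 : vpos π (y 0) = vpos π (x 1) := by rw [h]
        omega
      · exact hne h
    · have hv := RPaux.vpos_dropUntil_ge hπ (hy 1) h3
      omega
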